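/- Let f : Ω → ℝᵠ be continuous on an open set Ω ⊆ ℝⁿ with an isolated zero at p, the only zero in B(p,R) ⊆ Ω. Suppose that for every ε > 0 there is δ ∈ (0,R] such that for every r ∈ (0,δ), the restriction of f to S(p,r) is null-homotopic in the punctured ball B*(0,ε) ⊆ ℝᵠ. Then for every ε > 0 and every ρ ∈ (0,R], there exists a continuous map g : Ω → ℝᵠ such that: g = f outside B(p,ρ); ‖g(x) − f(x)‖ < ε for all x ∈ Ω; and g has no zeros in B(p,R). -/

import Mathlib

open Metric Set

/-- `f` restricted to `A` is null-homotopic as a map into `X` ⊆ ℝ^q: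
there is a continuous homotopy within `X` from `f|_A` to a constant map. -/
def IsNullHomotopicOn {n q : ℕ}
    (f : EuclideanSpace ℝ (Fin n) → EuclideanSpace ℝ (Fin q))
    (A : Set (EuclideanSpace ℝ (Fin n)))
    (X : Set (EuclideanSpace ℝ (Fin q))) : Prop :=
  ∃ (F : EuclideanSpace ℝ (Fin n) × ℝ → EuclideanSpace ℝ (Fin q))
    (c : EuclideanSpace ℝ (Fin q)),
      c ∈ X ∧
      ContinuousOn F (A ×ˢ Icc (0:ℝ) 1) ∧
      (∀ x ∈ A, F (x, 0) = f x) ∧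
      (∀ x ∈ A, F (x, 1) = c) ∧
      (∀ x ∈ A, ∀ t ∈ Icc (0:ℝ) 1, F (x, t) ∈ X)

theorem stmt3 {n q : ℕ} (Ω : Set (EuclideanSpace ℝ (Fin n)))
    (f : EuclideanSpace ℝ (Fin n) → EuclideanSpace ℝ (Fin q))
    (p : EuclideanSpace ℝ (Fin n)) (R : ℝ)
    (hΩ : IsOpen Ω) (hf : ContinuousOn f Ω) (hR : 0 < R)
    (hball : ball p R ⊆ Ω) (hp : f p = 0)
    (hiso : ∀ x ∈ ball p R, f x = 0 → x = p)
    (hinessential : ∀ ε > (0:ℝ), ∃ δ, 0 < δ ∧ δ ≤ R ∧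
      ∀ r ∈ Ioo (0:ℝ) δ,
        IsNullHomotopicOn f (sphere p r) {y | 0 < ‖y‖ ∧ ‖y‖ < ε}) :
    ∀ ε > (0:ℝ), ∀ ρ, 0 < ρ → ρ ≤ R →
      ∃ g : EuclideanSpace ℝ (Fin n) → EuclideanSpace ℝ (Fin q),
        ContinuousOn g Ω ∧
        (∀ x ∈ Ω \ ball p ρ, g x = f x) ∧
        (∀ x ∈ Ω, ‖g x - f x‖ < ε) ∧
        (∀ x ∈ ball p R, g x ≠ 0) := by
  classical
  intro ε hε ρ hρ hρR
  have hpΩ : p ∈ Ω := hball (mem_ball_self hR)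
  have hcf := hf p hpΩ
  rw [Metric.continuousWithinAt_iff] at hcf
  obtain ⟨r₁, hr₁0, hfr₁⟩ := hcf (ε / 2) (by linarith)
  obtain ⟨δ, hδ0, hδR, hδ⟩ := hinessential (ε / 2) (by linarith)
  set r : ℝ := min δ (min ρ r₁) / 2 with hrdef
  have hmin : 0 < min δ (min ρ r₁) := lt_min hδ0 (lt_min hρ hr₁0)
  have hr0 : 0 < r := half_pos hmin
  have hrδ : r < δ := by
    have h1 : min δ (min ρ r₁) ≤ δ := min_le_left _ _
    rw [hrdef]; linarith
  have hrρ : r < ρ := by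
    have h1 : min δ (min ρ r₁) ≤ ρ := le_trans (min_le_right _ _) (min_le_left _ _)
    rw [hrdef]; linarith
  have hrr₁ : r < r₁ := by
    have h1 : min δ (min ρ r₁) ≤ r₁ := le_trans (min_le_right _ _) (min_le_right _ _)
    rw [hrdef]; linarith
  have hrR : r < R := lt_of_lt_of_le hrρ hρR
  obtain ⟨F, c, ⟨hc0, hcε⟩, hFc, hF0, hF1, hFX⟩ := hδ r ⟨hr0, hrδ⟩
  set π : EuclideanSpace ℝ (Fin n) → EuclideanSpace ℝ (Fin n) :=
    fun x => p + (r / ‖x - p‖) • (x - p) with hπdef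
  set τ : EuclideanSpace ℝ (Fin n) → ℝ := fun x => 1 - ‖x - p‖ / r with hτdef
  set h : EuclideanSpace ℝ (Fin n) → EuclideanSpace ℝ (Fin q) :=
    fun x => if x = p then c else F (π x, τ x) with hhdef
  -- the radial projection lands on the sphere
  have hπs : ∀ x : EuclideanSpace ℝ (Fin n), x ≠ p → π x ∈ sphere p r := by
    intro x hx
    have hxp : ‖x - p‖ ≠ 0 := norm_ne_zero_iff.2 (sub_ne_zero.2 hx)
    have : ‖π x - p‖ = r := by
      simp only [hπdef, add_sub_cancel_left, norm_smul, Real.norm_eq_abs, abs_div,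
        abs_of_nonneg hr0.le, abs_norm]
      field_simp
    simpa [mem_sphere_iff_norm] using this
  have hτmem : ∀ x ∈ closedBall p r, τ x ∈ Icc (0:ℝ) 1 := by
    intro x hx
    rw [mem_closedBall, dist_eq_norm] at hx
    constructor
    · have : ‖x - p‖ / r ≤ 1 := (div_le_one hr0).2 hx
      simp only [hτdef]; linarith
    · have h1 : 0 ≤ ‖x - p‖ / r := by positivity
      simp only [hτdef]; linarith
  -- continuity of the pair map away from p
  have hΦ : ContinuousOn (fun x => (π x, τ x)) {x : EuclideanSpace ℝ (Fin n) | x ≠ p} := by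
    have hnorm : Continuous fun x : EuclideanSpace ℝ (Fin n) => ‖x - p‖ :=
      continuous_norm.comp (continuous_id.sub continuous_const)
    apply ContinuousOn.prodMk
    · apply continuousOn_const.add
      apply ContinuousOn.fun_smul
      · exact continuousOn_const.div hnorm.continuousOn
          (fun x hx => norm_ne_zero_iff.2 (sub_ne_zero.2 hx))
      · exact (continuous_id.sub continuous_const).continuousOn
    · exact continuousOn_const.sub (hnorm.continuousOn.div_const r)
  have hcomp : ContinuousOn (fun x => F (π x, τ x)) (closedBall p r \ {p}) := by
    apply hFc.comp (hΦ.mono (fun x hx => hx.2))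
    intro x hx
    exact Set.mk_mem_prod (hπs x hx.2) (hτmem x hx.1)
  have hh1 : ContinuousOn h (closedBall p r \ {p}) := by
    apply hcomp.congr
    intro x hx
    simp only [hhdef, if_neg (show x ≠ p from hx.2)]
  -- uniform continuity of F on the compact homotopy domain
  have hK : IsCompact ((sphere p r) ×ˢ (Icc (0:ℝ) 1)) :=
    (isCompact_sphere p r).prod isCompact_Icc
  have hUC := hK.uniformContinuousOn_of_continuous hFc
  rw [Metric.uniformContinuousOn_iff] at hUC
  have hhp : ContinuousWithinAt h (closedBall p r) p := by
    rw [Metric.continuousWithinAt_iff]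
    intro ε₀ hε₀
    obtain ⟨δ₀, hδ₀, hδ₀'⟩ := hUC ε₀ hε₀
    refine ⟨min r (r * δ₀), by positivity, ?_⟩
    intro y hy hyd
    by_cases hyp : y = p
    · simp [hhdef, hyp, hε₀]
    · have hy1 : (π y, τ y) ∈ sphere p r ×ˢ Icc (0:ℝ) 1 :=
        Set.mk_mem_prod (hπs y hyp) (hτmem y hy)
      have hy2 : (π y, (1:ℝ)) ∈ sphere p r ×ˢ Icc (0:ℝ) 1 :=
        Set.mk_mem_prod (hπs y hyp) (by norm_num)
      have hynorm : ‖y - p‖ < r * δ₀ := by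
        rw [dist_eq_norm] at hyd
        exact lt_of_lt_of_le hyd (min_le_right _ _)
      have hd : dist (π y, τ y) (π y, (1:ℝ)) < δ₀ := by
        rw [Prod.dist_eq]
        simp only [dist_self]
        rw [max_lt_iff]
        refine ⟨hδ₀, ?_⟩
        rw [Real.dist_eq]
        have habs : |τ y - 1| = ‖y - p‖ / r := by
          simp only [hτdef]
          rw [show 1 - ‖y - p‖ / r - 1 = -(‖y - p‖ / r) by ring, abs_neg,
            abs_of_nonneg (by positivity)]
        rw [habs, div_lt_iff₀ hr0, mul_comm]
        exact hynorm
      have hdF := hδ₀' _ hy1 _ hy2 hd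
      have hc' : F (π y, 1) = c := hF1 _ (hπs y hyp)
      simp only [hhdef, if_neg hyp, if_pos rfl]
      rw [hc'] at hdF
      exact hdF
  have hhcont : ContinuousOn h (closedBall p r) := by
    intro x hx
    by_cases hxp : x = p
    · subst hxp; exact hhp
    · refine (hh1 x ⟨hx, hxp⟩).mono_of_mem_nhdsWithin ?_
      exact Filter.diff_mem self_mem_nhdsWithin
        (mem_nhdsWithin_of_mem_nhds (isOpen_compl_singleton.mem_nhds hxp))
  -- facts about h on the sphere
  have hsphere_ne : ∀ a : EuclideanSpace ℝ (Fin n), a ∈ sphere p r → a ≠ p := by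
    intro a ha hap
    rw [hap, mem_sphere_iff_norm, sub_self, norm_zero] at ha
    exact hr0.ne ha
  have hh_eq_f : ∀ a ∈ sphere p r, h a = f a := by
    intro a ha
    have hap : a ≠ p := hsphere_ne a ha
    have hna : ‖a - p‖ = r := mem_sphere_iff_norm.1 ha
    have hπa : π a = a := by
      simp only [hπdef, hna, div_self hr0.ne']
      simp
    have hτa : τ a = 0 := by
      simp only [hτdef, hna, div_self hr0.ne', sub_self]
    simp only [hhdef, if_neg hap, hπa, hτa]
    exact hF0 a ha
  -- norm bounds on h inside the closed ball
  have hh_mem : ∀ x ∈ closedBall p r, 0 < ‖h x‖ ∧ ‖h x‖ < ε / 2 := by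
    intro x hx
    by_cases hxp : x = p
    · simp only [hhdef, if_pos hxp]
      exact ⟨hc0, hcε⟩
    · have := hFX (π x) (hπs x hxp) (τ x) (hτmem x hx)
      simp only [hhdef, if_neg hxp]
      exact this
  -- define g
  refine ⟨fun x => if x ∈ ball p r then h x else f x, ?_, ?_, ?_, ?_⟩
  · -- continuity
    have hball_eq : {a : EuclideanSpace ℝ (Fin n) | a ∈ ball p r} = ball p r := rfl
    apply ContinuousOn.if
    · intro a ha
      have hfr : a ∈ sphere p r := by
        have := ha.2
        rw [hball_eq, frontier_ball p hr0.ne'] at this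
        exact this
      exact hh_eq_f a hfr
    · refine hhcont.mono ?_
      rw [hball_eq, closure_ball p hr0.ne']
      exact fun x hx => hx.2
    · exact hf.mono (fun x hx => hx.1)
  · -- equals f outside ball p ρ
    intro x hx
    have : x ∉ ball p r := fun hmem => hx.2 (ball_subset_ball hrρ.le hmem)
    simp only [if_neg this]
  · -- approximation
    intro x hx
    by_cases hxb : x ∈ ball p r
    · have hxcb : x ∈ closedBall p r := ball_subset_closedBall hxb
      have h1 := (hh_mem x hxcb).2
      have h2 : ‖f x‖ < ε / 2 := by
        have hd : dist x p < r₁ := lt_trans (mem_ball.1 hxb) hrr₁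
        have := hfr₁ hx hd
        rwa [hp, dist_zero_right] at this
      simp only [if_pos hxb]
      calc ‖h x - f x‖ ≤ ‖h x‖ + ‖f x‖ := norm_sub_le _ _
        _ < ε := by linarith
    · simp only [if_neg hxb, sub_self, norm_zero]
      exact hε
  · -- no zeros in ball p R
    intro x hx
    by_cases hxb : x ∈ ball p r
    · simp only [if_pos hxb]
      have := (hh_mem x (ball_subset_closedBall hxb)).1
      intro h0
      rw [h0, norm_zero] at this
      exact lt_irrefl _ this
    · simp only [if_neg hxb]
      intro h0
      have := hiso x hx h0
      exact hxb (this ▸ mem_ball_self hr0)
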